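/- Let p be a prime, Φ : ℚ_p² → ℂ a locally constant compactly supported function with Φ(0,0) = 0, and χ : ℚ_p^× → ℂ^× a continuous character. Then for every s ∈ ℂ and every g ∈ GL₂(ℚ_p) the integral defining f_Φ(g; χ, s) converges absolutely (the integrand is compactly supported in ℚ_p^×), and for all a, d ∈ ℚ_p^×, b ∈ ℚ_p and g ∈ GL₂(ℚ_p) one has the principal-series transformation law f_Φ([[a,b],[0,d]]·g; χ, s) = χ(d)^{−1} · |a/d|_p^{s} · f_Φ(g; χ, s). -/

import Mathlib

open MeasureTheory

noncomputable section

section AuxLemmas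

open Topology

variable {p : ℕ} [Fact p.Prime]

lemma siegel_aux_cs (Φ : ℚ_[p] × ℚ_[p] → ℂ) (hΦlc : IsLocallyConstant Φ)
    (hΦcs : HasCompactSupport Φ) (hΦ0 : Φ (0, 0) = 0) (g0 g1 : ℚ_[p])
    (hg : g0 ≠ 0 ∨ g1 ≠ 0) :
    HasCompactSupport fun u : ℚ_[p]ˣ => Φ ((u : ℚ_[p]) * g0, (u : ℚ_[p]) * g1) := by
  obtain ⟨ε, hε, hb⟩ : ∃ ε > 0, ∀ x : ℚ_[p] × ℚ_[p], ‖x‖ < ε → Φ x = 0 := by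
    have h : IsOpen (Φ ⁻¹' {0}) := hΦlc.isOpen_fiber 0
    rw [Metric.isOpen_iff] at h
    obtain ⟨ε, hε, hb⟩ := h (0, 0) (by simpa using hΦ0)
    exact ⟨ε, hε, fun x hx => hb (show dist x 0 < ε by simpa [dist_eq_norm] using hx)⟩
  obtain ⟨M, hM⟩ : ∃ M : ℝ, ∀ x : ℚ_[p] × ℚ_[p], Φ x ≠ 0 → ‖x‖ ≤ M := by
    obtain ⟨M, hM⟩ := hΦcs.isBounded.subset_closedBall 0
    exact ⟨M, fun x hx => by simpa [dist_eq_norm] using hM (subset_tsupport Φ hx)⟩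
  set c : ℝ := max ‖g0‖ ‖g1‖ with hc
  have hcpos : 0 < c := by
    rcases hg with h | h
    · exact lt_max_of_lt_left (norm_pos_iff.2 h)
    · exact lt_max_of_lt_right (norm_pos_iff.2 h)
  set S : Set ℚ_[p] := {x | ε / c ≤ ‖x‖ ∧ ‖x‖ ≤ M / c} with hS
  have hSclosed : IsClosed S :=
    (isClosed_le continuous_const continuous_norm).inter
      (isClosed_le continuous_norm continuous_const)
  have hScompact : IsCompact S := by
    refine (isCompact_closedBall (0 : ℚ_[p]) (M / c)).of_isClosed_subset hSclosed ?_
    intro x hx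
    simpa [Metric.mem_closedBall, dist_eq_norm] using hx.2
  have hKcompact : IsCompact ((Units.val ⁻¹' S : Set ℚ_[p]ˣ)) := by
    rw [Units.isEmbedding_val₀.isCompact_iff]
    have : Units.val '' (Units.val ⁻¹' S : Set ℚ_[p]ˣ) = S := by
      rw [Set.image_preimage_eq_inter_range]
      refine Set.inter_eq_left.2 fun x hx => ?_
      have hx0 : x ≠ 0 := by
        intro h
        have := hx.1
        rw [h] at this
        simp at this
        have hpos : 0 < ε / c := div_pos hε hcpos
        linarith
      exact ⟨Units.mk0 x hx0, rfl⟩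
    rw [this]
    exact hScompact
  have hnorm : ∀ u : ℚ_[p]ˣ, ‖((u : ℚ_[p]) * g0, (u : ℚ_[p]) * g1)‖ = ‖(u : ℚ_[p])‖ * c := by
    intro u
    show max ‖(u : ℚ_[p]) * g0‖ ‖(u : ℚ_[p]) * g1‖ = _
    rw [norm_mul, norm_mul, hc, mul_max_of_nonneg _ _ (norm_nonneg _)]
  have hsub : (Function.support fun u : ℚ_[p]ˣ => Φ ((u : ℚ_[p]) * g0, (u : ℚ_[p]) * g1))
      ⊆ Units.val ⁻¹' S := by
    intro u hu
    have h1 : ε ≤ ‖(u : ℚ_[p])‖ * c := by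
      by_contra h
      exact hu (hb _ (by rw [hnorm]; linarith))
    have h2 : ‖(u : ℚ_[p])‖ * c ≤ M := by
      have := hM _ hu
      rwa [hnorm] at this
    constructor
    · rw [div_le_iff₀ hcpos]; exact h1
    · rw [le_div_iff₀ hcpos]; exact h2
  exact hKcompact.of_isClosed_subset (isClosed_tsupport _)
    (closure_minimal hsub (hSclosed.preimage Units.continuous_val))

variable [MeasurableSpace ℚ_[p]] [BorelSpace ℚ_[p]]

lemma siegel_aux_borel : BorelSpace ℚ_[p]ˣ := by
  constructor
  rw [Units.instMeasurableSpace, ‹BorelSpace ℚ_[p]›.measurable_eq,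
    ← borel_comap, Units.isEmbedding_val₀.eq_induced]

lemma siegel_aux_int (Φ : ℚ_[p] × ℚ_[p] → ℂ) (hΦlc : IsLocallyConstant Φ)
    (hΦcs : HasCompactSupport Φ) (hΦ0 : Φ (0, 0) = 0)
    (χ : ℚ_[p]ˣ →* ℂˣ) (hχ : Continuous fun u : ℚ_[p]ˣ => (χ u : ℂ))
    (μ : Measure ℚ_[p]ˣ) [μ.IsHaarMeasure] (s : ℂ) (g0 g1 : ℚ_[p])
    (hg : g0 ≠ 0 ∨ g1 ≠ 0) :
    Integrable (fun a : ℚ_[p]ˣ =>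
      Φ ((a : ℚ_[p]) * g0, (a : ℚ_[p]) * g1) * (χ a : ℂ) *
        (‖(a : ℚ_[p])‖ : ℂ) ^ (2 * s)) μ := by
  haveI : BorelSpace ℚ_[p]ˣ := siegel_aux_borel
  have hcont : Continuous (fun a : ℚ_[p]ˣ =>
      Φ ((a : ℚ_[p]) * g0, (a : ℚ_[p]) * g1) * (χ a : ℂ) *
        (‖(a : ℚ_[p])‖ : ℂ) ^ (2 * s)) := by
    have h1 : Continuous fun a : ℚ_[p]ˣ => Φ ((a : ℚ_[p]) * g0, (a : ℚ_[p]) * g1) :=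
      hΦlc.continuous.comp
        (((Units.continuous_val.mul continuous_const)).prodMk
          ((Units.continuous_val.mul continuous_const)))
    have h2 : Continuous fun a : ℚ_[p]ˣ => ((‖(a : ℚ_[p])‖ : ℝ) : ℂ) ^ (2 * s) := by
      rw [continuous_iff_continuousAt]
      intro a
      refine ContinuousAt.cpow ?_ continuousAt_const ?_
      · exact (Complex.continuous_ofReal.comp
          (continuous_norm.comp Units.continuous_val)).continuousAt
      · exact Complex.ofReal_mem_slitPlane.2 (norm_pos_iff.2 a.ne_zero)
    exact (h1.mul hχ).mul h2
  have hcs : HasCompactSupport (fun a : ℚ_[p]ˣ =>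
      Φ ((a : ℚ_[p]) * g0, (a : ℚ_[p]) * g1) * (χ a : ℂ) *
        (‖(a : ℚ_[p])‖ : ℂ) ^ (2 * s)) :=
    ((siegel_aux_cs Φ hΦlc hΦcs hΦ0 g0 g1 hg).mul_right).mul_right
  exact hcont.integrable_of_hasCompactSupport hcs

lemma siegel_aux_row (g : Matrix (Fin 2) (Fin 2) ℚ_[p]) (hg : IsUnit g) :
    g 1 0 ≠ 0 ∨ g 1 1 ≠ 0 := by
  have hdet : g.det ≠ 0 := ((Matrix.isUnit_iff_isUnit_det g).1 hg).ne_zero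
  by_contra h
  push_neg at h
  rw [Matrix.det_fin_two, h.1, h.2] at hdet
  simp at hdet

lemma siegel_aux_mul_cpow (x y : ℝ) (hx : 0 ≤ x) (hy : 0 ≤ y) (s : ℂ) :
    (((x * y : ℝ)) : ℂ) ^ s = (x : ℂ) ^ s * (y : ℂ) ^ s := by
  rw [Complex.ofReal_mul, Complex.mul_cpow_ofReal_nonneg hx hy]

lemma siegel_aux_inv_cpow (x : ℝ) (hx : 0 < x) (s : ℂ) :
    ((x⁻¹ : ℝ) : ℂ) ^ s = ((x : ℂ) ^ s)⁻¹ := by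
  rw [Complex.ofReal_inv, Complex.inv_cpow]
  rw [Complex.arg_ofReal_of_nonneg hx.le]
  exact Real.pi_ne_zero.symm

lemma siegel_aux_two_cpow (x : ℝ) (hx : 0 < x) (s : ℂ) :
    (x : ℂ) ^ (2 * s) = (x : ℂ) ^ s * (x : ℂ) ^ s := by
  rw [two_mul, Complex.cpow_add _ _ (by exact_mod_cast hx.ne')]

lemma siegel_aux_cpow_ne (x : ℝ) (hx : 0 < x) (s : ℂ) : (x : ℂ) ^ s ≠ 0 := by
  intro h
  rcases (Complex.cpow_eq_zero_iff _ _).1 h with ⟨h1, -⟩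
  exact absurd h1 (by exact_mod_cast hx.ne')

end AuxLemmas

/-- The local Siegel section
`f_Φ(g; χ, s) = |det g|_p^s · ∫_{ℚ_p^×} Φ((0,a)·g) χ(a) |a|_p^{2s} d^×a`,
where `d^×a` is the Haar measure `μ` on `ℚ_p^×`. -/
def siegelSection (p : ℕ) [Fact p.Prime] [MeasurableSpace ℚ_[p]] [BorelSpace ℚ_[p]]
    (μ : Measure ℚ_[p]ˣ) (Φ : ℚ_[p] × ℚ_[p] → ℂ) (χ : ℚ_[p]ˣ →* ℂˣ) (s : ℂ)
    (g : Matrix (Fin 2) (Fin 2) ℚ_[p]) : ℂ :=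
  (‖g.det‖ : ℂ) ^ s *
    ∫ a : ℚ_[p]ˣ, Φ ((a : ℚ_[p]) * g 1 0, (a : ℚ_[p]) * g 1 1) * (χ a : ℂ) *
      (‖(a : ℚ_[p])‖ : ℂ) ^ (2 * s) ∂μ

/-- **Convergence and the principal-series transformation law for Siegel sections.**
Let `p` be a prime, `Φ : ℚ_p² → ℂ` locally constant and compactly supported with `Φ(0,0) = 0`,
and `χ : ℚ_p^× → ℂ^×` a continuous character.  Then for every `s ∈ ℂ` and every
`g ∈ GL₂(ℚ_p)` the integral defining `f_Φ(g; χ, s)` converges absolutely, and for all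
`a, d ∈ ℚ_p^×`, `b ∈ ℚ_p` and `g ∈ GL₂(ℚ_p)` one has
`f_Φ([[a,b],[0,d]]·g; χ, s) = χ(d)^{−1} · |a/d|_p^{s} · f_Φ(g; χ, s)`. -/
theorem stmt_8 (p : ℕ) [Fact p.Prime] [MeasurableSpace ℚ_[p]] [BorelSpace ℚ_[p]]
    (Φ : ℚ_[p] × ℚ_[p] → ℂ) (hΦlc : IsLocallyConstant Φ) (hΦcs : HasCompactSupport Φ)
    (hΦ0 : Φ (0, 0) = 0)
    (χ : ℚ_[p]ˣ →* ℂˣ) (hχ : Continuous fun u : ℚ_[p]ˣ => (χ u : ℂ))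
    (μ : Measure ℚ_[p]ˣ) [μ.IsHaarMeasure]
    (hμ : μ {u : ℚ_[p]ˣ | ‖(u : ℚ_[p])‖ = 1} = 1) :
    (∀ (s : ℂ) (g : Matrix (Fin 2) (Fin 2) ℚ_[p]), IsUnit g →
      Integrable (fun a : ℚ_[p]ˣ =>
        Φ ((a : ℚ_[p]) * g 1 0, (a : ℚ_[p]) * g 1 1) * (χ a : ℂ) *
          (‖(a : ℚ_[p])‖ : ℂ) ^ (2 * s)) μ) ∧
    (∀ (s : ℂ) (a d : ℚ_[p]ˣ) (b : ℚ_[p]) (g : Matrix (Fin 2) (Fin 2) ℚ_[p]), IsUnit g →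
      siegelSection p μ Φ χ s (!![(a : ℚ_[p]), b; 0, (d : ℚ_[p])] * g) =
        (((χ d)⁻¹ : ℂˣ) : ℂ) * (‖(a : ℚ_[p]) / (d : ℚ_[p])‖ : ℂ) ^ s *
          siegelSection p μ Φ χ s g) := by
  haveI : BorelSpace ℚ_[p]ˣ := siegel_aux_borel
  constructor
  · intro s g hg
    exact siegel_aux_int Φ hΦlc hΦcs hΦ0 χ hχ μ s _ _ (siegel_aux_row g hg)
  · intro s a d b g hg
    have h10 : (!![(a : ℚ_[p]), b; 0, (d : ℚ_[p])] * g) 1 0 = (d : ℚ_[p]) * g 1 0 := by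
      simp [Matrix.mul_apply, Fin.sum_univ_two]
    have h11 : (!![(a : ℚ_[p]), b; 0, (d : ℚ_[p])] * g) 1 1 = (d : ℚ_[p]) * g 1 1 := by
      simp [Matrix.mul_apply, Fin.sum_univ_two]
    have hdet : (!![(a : ℚ_[p]), b; 0, (d : ℚ_[p])] * g).det
        = (a : ℚ_[p]) * (d : ℚ_[p]) * g.det := by
      rw [Matrix.det_mul, Matrix.det_fin_two_of]; ring
    set F : ℚ_[p]ˣ → ℂ := fun u =>
      Φ ((u : ℚ_[p]) * g 1 0, (u : ℚ_[p]) * g 1 1) * (χ u : ℂ) *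
        (‖(u : ℚ_[p])‖ : ℂ) ^ (2 * s) with hF
    have hdpos : (0 : ℝ) < ‖(d : ℚ_[p])‖ := norm_pos_iff.2 d.ne_zero
    have hapos : (0 : ℝ) < ‖(a : ℚ_[p])‖ := norm_pos_iff.2 a.ne_zero
    have hD2ne : ((‖(d : ℚ_[p])‖ : ℝ) : ℂ) ^ (2 * s) ≠ 0 := siegel_aux_cpow_ne _ hdpos _
    have hDne : ((‖(d : ℚ_[p])‖ : ℝ) : ℂ) ^ s ≠ 0 := siegel_aux_cpow_ne _ hdpos _
    have hχdne : (χ d : ℂ) ≠ 0 := (χ d).ne_zero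
    have key : (∫ u : ℚ_[p]ˣ,
        Φ ((u : ℚ_[p]) * ((d : ℚ_[p]) * g 1 0), (u : ℚ_[p]) * ((d : ℚ_[p]) * g 1 1)) *
          (χ u : ℂ) * (‖(u : ℚ_[p])‖ : ℂ) ^ (2 * s) ∂μ)
        = (χ d : ℂ)⁻¹ * (((‖(d : ℚ_[p])‖ : ℝ) : ℂ) ^ (2 * s))⁻¹ * ∫ u, F u ∂μ := by
      calc (∫ u : ℚ_[p]ˣ,
          Φ ((u : ℚ_[p]) * ((d : ℚ_[p]) * g 1 0), (u : ℚ_[p]) * ((d : ℚ_[p]) * g 1 1)) *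
            (χ u : ℂ) * (‖(u : ℚ_[p])‖ : ℂ) ^ (2 * s) ∂μ)
          = ∫ u : ℚ_[p]ˣ,
            (χ d : ℂ)⁻¹ * (((‖(d : ℚ_[p])‖ : ℝ) : ℂ) ^ (2 * s))⁻¹ * F (u * d) ∂μ := by
            congr 1
            funext u
            rw [hF]
            simp only [Units.val_mul]
            rw [norm_mul, siegel_aux_mul_cpow _ _ (norm_nonneg _) (norm_nonneg _),
              map_mul χ, Units.val_mul, mul_assoc ((u : ℚ_[p])), mul_assoc ((u : ℚ_[p]))]
            field_simp
        _ = (χ d : ℂ)⁻¹ * (((‖(d : ℚ_[p])‖ : ℝ) : ℂ) ^ (2 * s))⁻¹ *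
              ∫ u, F (u * d) ∂μ := by
            rw [MeasureTheory.integral_const_mul]
        _ = _ := by rw [integral_mul_right_eq_self F d]
    show (‖(!![(a : ℚ_[p]), b; 0, (d : ℚ_[p])] * g).det‖ : ℂ) ^ s * _ = _
    rw [hdet, h10, h11, key]
    show _ = _ * _ * ((‖g.det‖ : ℂ) ^ s * ∫ u, F u ∂μ)
    rw [norm_mul, norm_mul, norm_div,
      siegel_aux_mul_cpow _ _ (by positivity) (norm_nonneg _) s,
      siegel_aux_mul_cpow _ _ (norm_nonneg _) (norm_nonneg _) s,
      div_eq_mul_inv ‖(a : ℚ_[p])‖,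
      siegel_aux_mul_cpow _ _ (norm_nonneg _) (by positivity) s,
      siegel_aux_inv_cpow _ hdpos s,
      siegel_aux_two_cpow _ hdpos s]
    field_simp
    rw [Units.val_inv_eq_inv_val, eq_comm, mul_inv_eq_iff_eq_mul₀ hχdne]
    ring
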